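/- arXiv:2401.00378 — 2 statements merged into one kernel-verified Lean document; each statement's English description precedes it below -/
import Mathlib

section
/- Let p be a Markov kernel on a measurable space (S,𝒮) and let μ be a probability measure on (S,𝒮) invariant for p, with the property that every (μ,p)-ergodic set G ∈ 𝒮 satisfies μ(G) = 0. Then for every integer k ≥ 1 there exists a partition of S into 2^{2k} measurable (μ,p)-invariant sets F₁, …, F_{2^{2k}} with 0 < μ(F_i) ≤ 2^{−k} for each i. -/
open MeasureTheory ProbabilityTheory Set Pointwise
open scoped ENNReal

noncomputable section

/-- The increasing affine map from `(-1,1)` onto the chord `E_u`. -/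
def ellMap (γ u x : ℝ) : ℝ := -u * Real.cos γ + x * Real.sqrt (1 - u ^ 2 * Real.sin γ ^ 2)

/-- The inverse of `ellMap γ u`. -/
def ellInv (γ u y : ℝ) : ℝ := (y + u * Real.cos γ) / Real.sqrt (1 - u ^ 2 * Real.sin γ ^ 2)

/-- The open elliptical region `E`. -/
def Eset (γ : ℝ) : Set (ℝ × ℝ) :=
  {p | p.1 ^ 2 + 2 * Real.cos γ * p.1 * p.2 + p.2 ^ 2 < 1}

/-- The state space `E* = E × {−1,1}`, realized inside `ℝ × ℝ × ℝ`. -/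
def EstarSet (γ : ℝ) : Set (ℝ × ℝ × ℝ) :=
  {w | (w.1, w.2.1) ∈ Eset γ ∧ (w.2.2 = 1 ∨ w.2.2 = -1)}

/-- Uniform probability measure on `(-1,1)`. -/
def m1 : Measure ℝ := (2 : ℝ≥0∞)⁻¹ • volume.restrict (Ioo (-1 : ℝ) 1)

/-- The probability measure `m²` on `E*`: normalized Lebesgue measure on `E` times
uniform measure on `{−1,1}`. -/
def m2 (γ : ℝ) : Measure (ℝ × ℝ × ℝ) :=
  ((((volume (Eset γ))⁻¹ • volume.restrict (Eset γ)).prod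
      ((2 : ℝ≥0∞)⁻¹ • (Measure.dirac (1 : ℝ) + Measure.dirac (-1 : ℝ)))).map
    fun p => (p.1.1, p.1.2, p.2))

/-- `q` is a Markov kernel on `(-1,1)`. -/
def IsMarkovOnInterval (q : Kernel ℝ ℝ) : Prop :=
  IsMarkovKernel q ∧ ∀ x ∈ Ioo (-1 : ℝ) 1, q x (Ioo (-1 : ℝ) 1) = 1

/-- The kernel `Q` of the alternating random walk, as a measure-valued function on the
state space. -/
def Qfun (γ : ℝ) (q : Kernel ℝ ℝ) : ℝ × ℝ × ℝ → Measure (ℝ × ℝ × ℝ) := fun w =>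
  if w.2.2 = -1 then
    Measure.map (fun x => (ellMap γ w.2.1 x, w.2.1, (1 : ℝ))) (q (-ellInv γ w.2.1 w.1))
  else
    Measure.map (fun x => (w.1, ellMap γ w.1 x, (-1 : ℝ))) (q (-ellInv γ w.1 w.2.1))

/-- The kernel `Q†`. -/
def Qdag (γ : ℝ) (q : Kernel ℝ ℝ) : ℝ × ℝ × ℝ → Measure (ℝ × ℝ × ℝ) := fun w =>
  if w.2.2 = 1 then
    Measure.map (fun x => (ellMap γ w.2.1 x, w.2.1, (-1 : ℝ)))
      ((q (ellInv γ w.2.1 w.1)).map (fun y => -y))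
  else
    Measure.map (fun x => (w.1, ellMap γ w.1 x, (1 : ℝ)))
      ((q (ellInv γ w.1 w.2.1)).map (fun y => -y))

/-- Bounded continuous real-valued functions on a subset `S`. -/
def BddCtsOn {X : Type*} [TopologicalSpace X] (S : Set X) (f : X → ℝ) : Prop :=
  ContinuousOn f S ∧ ∃ C, ∀ x ∈ S, |f x| ≤ C

/-- `m¹` is a reversible measure for `q`. -/
def Reversible1 (q : Kernel ℝ ℝ) : Prop :=
  ∀ j k : ℝ → ℝ, BddCtsOn (Ioo (-1 : ℝ) 1) j → BddCtsOn (Ioo (-1 : ℝ) 1) k →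
    ∫ x, k x * ∫ y, j y ∂(q x) ∂m1 = ∫ x, j x * ∫ y, k y ∂(q x) ∂m1

/-- The `†`-operation on measure-valued functions on `(-1,1)`: `p†(x,A) := p(−x,−A)`. -/
def dag (p : ℝ → Measure ℝ) : ℝ → Measure ℝ := fun x => (p (-x)).map (fun y => -y)

/-- `m¹` is a `†`-reversible measure for `p`. -/
def DagReversible1 (p : ℝ → Measure ℝ) : Prop :=
  ∀ j k : ℝ → ℝ, BddCtsOn (Ioo (-1 : ℝ) 1) j → BddCtsOn (Ioo (-1 : ℝ) 1) k →
    ∫ x, k x * ∫ y, j y ∂(p x) ∂m1 = ∫ x, j x * ∫ y, k y ∂(dag p x) ∂m1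

/-- `m²` is a `†`-reversible measure for `Q`. -/
def DagReversible2 (γ : ℝ) (q : Kernel ℝ ℝ) : Prop :=
  ∀ f g : ℝ × ℝ × ℝ → ℝ, BddCtsOn (EstarSet γ) f → BddCtsOn (EstarSet γ) g →
    ∫ w, g w * ∫ w', f w' ∂(Qfun γ q w) ∂(m2 γ) =
      ∫ w, f w * ∫ w', g w' ∂(Qdag γ q w) ∂(m2 γ)

/-- `μ` is an invariant measure for the transition function `p`. -/
def KInvariantMeasure {S : Type*} [MeasurableSpace S] (μ : Measure S) (p : S → Measure S) :
    Prop :=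
  ∀ A : Set S, MeasurableSet A → ∫⁻ x, p x A ∂μ = μ A

/-- The set `A` is `(μ,p)`-invariant. -/
def KInvariantSet {S : Type*} [MeasurableSpace S] (μ : Measure S) (p : S → Measure S)
    (A : Set S) : Prop :=
  ∀ᵐ x ∂μ, x ∈ A → p x A = 1

/-- `μ` is an ergodic measure for the transition function `p`. -/
def KErgodicMeasure {S : Type*} [MeasurableSpace S] (μ : Measure S) (p : S → Measure S) :
    Prop :=
  KInvariantMeasure μ p ∧
    ∀ A : Set S, MeasurableSet A → KInvariantSet μ p A → μ A = 0 ∨ μ A = 1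

/-- The set `A` is `(μ,p)`-ergodic. -/
def KErgodicSet {S : Type*} [MeasurableSpace S] (μ : Measure S) (p : S → Measure S)
    (A : Set S) : Prop :=
  MeasurableSet A ∧ KInvariantSet μ p A ∧
    ∀ B : Set S, B ⊆ A → MeasurableSet B → KInvariantSet μ p B → μ B = 0 ∨ μ B = μ A

/-- `F⁺`: the slice of `F ⊆ E*` at `s = 1`. -/
def Fplus (F : Set (ℝ × ℝ × ℝ)) : Set (ℝ × ℝ) := {p | (p.1, p.2, (1 : ℝ)) ∈ F}

/-- `F⁻`: the slice of `F ⊆ E*` at `s = −1`. -/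
def Fminus (F : Set (ℝ × ℝ × ℝ)) : Set (ℝ × ℝ) := {p | (p.1, p.2, (-1 : ℝ)) ∈ F}

/-- `[G]^u ⊆ (−1,1)`. -/
def brU (γ : ℝ) (G : Set (ℝ × ℝ)) (u : ℝ) : Set ℝ :=
  {x | x ∈ Ioo (-1 : ℝ) 1 ∧ (u, ellMap γ u x) ∈ G}

/-- `[G]_v ⊆ (−1,1)`. -/
def brV (γ : ℝ) (G : Set (ℝ × ℝ)) (v : ℝ) : Set ℝ :=
  {x | x ∈ Ioo (-1 : ℝ) 1 ∧ (ellMap γ v x, v) ∈ G}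

/-- The map `T₀` on `E*`. -/
def T0 (γ : ℝ) (w : ℝ × ℝ × ℝ) : ℝ × ℝ × ℝ :=
  (-w.1 - 2 * w.2.1 * Real.cos γ, w.2.1, -w.2.2)

/-- The map `T₁` on `E*`. -/
def T1 (γ : ℝ) (w : ℝ × ℝ × ℝ) : ℝ × ℝ × ℝ :=
  (w.1, -w.2.1 - 2 * w.1 * Real.cos γ, -w.2.2)

/-- The linear map `U_γ` taking `E` to the unit disk. -/
def Ugamma (γ : ℝ) (p : ℝ × ℝ) : ℝ × ℝ := (p.1 + p.2 * Real.cos γ, p.2 * Real.sin γ)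

/-- `V(u,v,s) = s·|U_γ(u,v)|²`. -/
def Vfun (γ : ℝ) (w : ℝ × ℝ × ℝ) : ℝ :=
  w.2.2 * ((w.1 + w.2.1 * Real.cos γ) ^ 2 + (w.2.1 * Real.sin γ) ^ 2)

section AuxPartition

variable {S : Type*} [MeasurableSpace S] {p : Kernel S S} {μ : Measure S}

private lemma aux_full_of_subset {ν : Measure S} [IsProbabilityMeasure ν] {A B : Set S}
    (h : A ⊆ B) (hA : ν A = 1) : ν B = 1 :=
  le_antisymm prob_le_one (hA ▸ measure_mono h)

private lemma aux_full_inter {ν : Measure S} [IsProbabilityMeasure ν] {A B : Set S}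
    (hB : MeasurableSet B) (hA1 : ν A = 1) (hB1 : ν B = 1) : ν (A ∩ B) = 1 := by
  have h := measure_union_add_inter (μ := ν) A hB
  have hU : ν (A ∪ B) = 1 := aux_full_of_subset subset_union_left hA1
  rw [hU, hA1, hB1] at h
  exact (ENNReal.add_right_inj ENNReal.one_ne_top).mp h

private lemma aux_inv_empty : KInvariantSet μ (fun x => p x) (∅ : Set S) :=
  Filter.Eventually.of_forall fun x hx => absurd hx (Set.notMem_empty x)

private lemma aux_inv_univ [IsMarkovKernel p] : KInvariantSet μ (fun x => p x) (univ : Set S) :=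
  Filter.Eventually.of_forall fun x _ => measure_univ

private lemma aux_inv_union [IsMarkovKernel p] {A B : Set S}
    (hA : KInvariantSet μ (fun x => p x) A) (hB : KInvariantSet μ (fun x => p x) B) :
    KInvariantSet μ (fun x => p x) (A ∪ B) := by
  filter_upwards [hA, hB] with x hxA hxB hx
  rcases hx with h | h
  · exact aux_full_of_subset subset_union_left (hxA h)
  · exact aux_full_of_subset subset_union_right (hxB h)

private lemma aux_inv_iUnion [IsMarkovKernel p] {B : ℕ → Set S}
    (hB : ∀ n, KInvariantSet μ (fun x => p x) (B n)) :
    KInvariantSet μ (fun x => p x) (⋃ n, B n) := by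
  have h : ∀ᵐ x ∂μ, ∀ n, x ∈ B n → p x (B n) = 1 := (ae_all_iff).2 hB
  filter_upwards [h] with x hx hmem
  obtain ⟨n, hn⟩ := Set.mem_iUnion.mp hmem
  exact aux_full_of_subset (Set.subset_iUnion B n) (hx n hn)

private lemma aux_inv_compl [IsMarkovKernel p] [IsProbabilityMeasure μ]
    (hinv : KInvariantMeasure μ (fun x => p x)) {B : Set S} (hBm : MeasurableSet B)
    (hB : KInvariantSet μ (fun x => p x) B) :
    KInvariantSet μ (fun x => p x) Bᶜ := by
  have hmeas : Measurable fun x => p x B := p.measurable_coe hBm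
  have htot : ∫⁻ x in B, p x B ∂μ + ∫⁻ x in Bᶜ, p x B ∂μ = μ B := by
    rw [lintegral_add_compl _ hBm]; exact hinv B hBm
  have hone : ∫⁻ x in B, p x B ∂μ = μ B := by
    have h1 : ∀ᵐ x ∂(μ.restrict B), p x B = 1 := (ae_restrict_iff' hBm).2 hB
    rw [lintegral_congr_ae h1, lintegral_one, Measure.restrict_apply_univ]
  have hzero : ∫⁻ x in Bᶜ, p x B ∂μ = 0 := by
    rw [hone] at htot
    exact (ENNReal.add_right_inj (measure_ne_top μ B)).mp (htot.trans (add_zero _).symm)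
  have h0 : ∀ᵐ x ∂(μ.restrict Bᶜ), p x B = 0 := (lintegral_eq_zero_iff hmeas).1 hzero
  have h0' : ∀ᵐ x ∂μ, x ∈ Bᶜ → p x B = 0 := (ae_restrict_iff' hBm.compl).1 h0
  filter_upwards [h0'] with x hx hxc
  rw [measure_compl hBm (measure_ne_top _ _), measure_univ, hx hxc, tsub_zero]

private lemma aux_inv_diff [IsMarkovKernel p] [IsProbabilityMeasure μ]
    (hinv : KInvariantMeasure μ (fun x => p x)) {A B : Set S}
    (hA : KInvariantSet μ (fun x => p x) A) (hBm : MeasurableSet B)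
    (hB : KInvariantSet μ (fun x => p x) B) :
    KInvariantSet μ (fun x => p x) (A \ B) := by
  have hc := aux_inv_compl hinv hBm hB
  filter_upwards [hA, hc] with x hxA hxB hx
  rw [Set.diff_eq]
  exact aux_full_inter hBm.compl (hxA hx.1) (hxB hx.2)

private lemma aux_split [IsMarkovKernel p] [IsProbabilityMeasure μ]
    (hinv : KInvariantMeasure μ (fun x => p x))
    (herg : ∀ G : Set S, KErgodicSet μ (fun x => p x) G → μ G = 0)
    {A : Set S} (hAm : MeasurableSet A) (hA : KInvariantSet μ (fun x => p x) A)
    (hpos : 0 < μ A) :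
    ∃ B, B ⊆ A ∧ MeasurableSet B ∧ KInvariantSet μ (fun x => p x) B ∧
      0 < μ B ∧ 2 * μ B ≤ μ A := by
  have hne : ¬ KErgodicSet μ (fun x => p x) A := fun h => absurd (herg A h) hpos.ne'
  rw [KErgodicSet] at hne
  push_neg at hne
  obtain ⟨B, hBA, hBm, hBi, hB0, hBA'⟩ := hne hAm hA
  have hCm : MeasurableSet (A \ B) := hAm.diff hBm
  have hCi := aux_inv_diff hinv hA hBm hBi
  have hsum : μ B + μ (A \ B) = μ A := by
    rw [measure_add_diff hBm.nullMeasurableSet A, Set.union_eq_self_of_subset_left hBA]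
  have hC0 : μ (A \ B) ≠ 0 := by
    intro h; rw [h, add_zero] at hsum; exact hBA' hsum
  rcases le_total (μ B) (μ (A \ B)) with h | h
  · exact ⟨B, hBA, hBm, hBi, pos_iff_ne_zero.2 hB0,
      by rw [two_mul]; calc μ B + μ B ≤ μ B + μ (A \ B) := add_le_add_right h _
        _ = μ A := hsum⟩
  · exact ⟨A \ B, Set.diff_subset, hCm, hCi, pos_iff_ne_zero.2 hC0,
      by rw [two_mul]; calc μ (A \ B) + μ (A \ B) ≤ μ B + μ (A \ B) := add_le_add_left h _
        _ = μ A := hsum⟩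

private lemma aux_small [IsMarkovKernel p] [IsProbabilityMeasure μ]
    (hinv : KInvariantMeasure μ (fun x => p x))
    (herg : ∀ G : Set S, KErgodicSet μ (fun x => p x) G → μ G = 0)
    {A : Set S} (hAm : MeasurableSet A) (hA : KInvariantSet μ (fun x => p x) A)
    (hpos : 0 < μ A) {ε : ℝ≥0∞} (hε : ε ≠ 0) :
    ∃ B, B ⊆ A ∧ MeasurableSet B ∧ KInvariantSet μ (fun x => p x) B ∧
      0 < μ B ∧ μ B ≤ ε := by
  obtain ⟨n, hn⟩ := ENNReal.exists_inv_two_pow_lt hε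
  have key : ∀ n : ℕ, ∃ B, B ⊆ A ∧ MeasurableSet B ∧ KInvariantSet μ (fun x => p x) B ∧
      0 < μ B ∧ μ B ≤ 2⁻¹ ^ n * μ A := by
    intro n
    induction n with
    | zero => exact ⟨A, subset_rfl, hAm, hA, hpos, by simp⟩
    | succ n ih =>
      obtain ⟨B, hBA, hBm, hBi, hbpos, hble⟩ := ih
      obtain ⟨C, hCB, hCm, hCi, hcpos, hcle⟩ := aux_split hinv herg hBm hBi hbpos
      refine ⟨C, hCB.trans hBA, hCm, hCi, hcpos, ?_⟩
      calc μ C = 2⁻¹ * (2 * μ C) := by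
            rw [← mul_assoc, ENNReal.inv_mul_cancel two_ne_zero ENNReal.ofNat_ne_top, one_mul]
        _ ≤ 2⁻¹ * (2⁻¹ ^ n * μ A) := mul_le_mul_right (hcle.trans hble) _
        _ = 2⁻¹ ^ (n + 1) * μ A := by rw [← mul_assoc, ← pow_succ']
  obtain ⟨B, h1, h2, h3, h4, h5⟩ := key n
  refine ⟨B, h1, h2, h3, h4, h5.trans ?_⟩
  calc 2⁻¹ ^ n * μ A ≤ 2⁻¹ ^ n * 1 := mul_le_mul_right prob_le_one _
    _ ≤ ε := by rw [mul_one]; exact hn.le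

private lemma aux_crux [IsMarkovKernel p] [IsProbabilityMeasure μ]
    (hinv : KInvariantMeasure μ (fun x => p x))
    (herg : ∀ G : Set S, KErgodicSet μ (fun x => p x) G → μ G = 0)
    {A : Set S} (hAm : MeasurableSet A) (hA : KInvariantSet μ (fun x => p x) A)
    (hpos : 0 < μ A) :
    ∃ B, B ⊆ A ∧ MeasurableSet B ∧ KInvariantSet μ (fun x => p x) B ∧
      μ A ≤ 3 * μ B ∧ 3 * μ B ≤ 2 * μ A := by
  by_contra hcon
  push_neg at hcon
  have hsmall : ∀ B, B ⊆ A → MeasurableSet B → KInvariantSet μ (fun x => p x) B →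
      3 * μ B ≤ 2 * μ A → 3 * μ B < μ A := by
    intro B h1 h2 h3 h4
    by_contra h
    push_neg at h
    exact absurd h4 (not_le.mpr (hcon B h1 h2 h3 h))
  set T : Set ℝ≥0∞ := {r | ∃ B, B ⊆ A ∧ MeasurableSet B ∧ KInvariantSet μ (fun x => p x) B ∧
      3 * μ B ≤ 2 * μ A ∧ μ B = r} with hT
  set c : ℝ≥0∞ := sSup T with hc
  have hmemle : ∀ r ∈ T, r ≤ c := fun r hr => le_sSup hr
  have hcle1 : c ≤ 1 := by
    refine sSup_le fun r hr => ?_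
    obtain ⟨B, _, _, _, _, hBr⟩ := hr
    exact hBr ▸ prob_le_one
  have hcnetop : c ≠ ∞ := (hcle1.trans_lt ENNReal.one_lt_top).ne
  have h3c : 3 * c ≤ μ A := by
    have : c ≤ μ A / 3 := by
      refine sSup_le fun r hr => ?_
      obtain ⟨B, h1, h2, h3, h4, hBr⟩ := hr
      have := (hsmall B h1 h2 h3 h4).le
      rw [hBr] at this
      exact (ENNReal.le_div_iff_mul_le (Or.inl (by norm_num)) (Or.inl (by norm_num))).2
        (by rwa [mul_comm])
    have := (ENNReal.le_div_iff_mul_le (Or.inl (by norm_num)) (Or.inl (by norm_num))).1 this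
    rwa [mul_comm] at this
  have hcpos : c ≠ 0 := by
    obtain ⟨D, hD1, hD2, hD3, hD4, hD5⟩ := aux_small hinv herg hAm hA hpos
      (ε := 2 * μ A / 3) (by
        rw [Ne, ENNReal.div_eq_zero_iff]
        push_neg
        exact ⟨mul_ne_zero two_ne_zero hpos.ne', by norm_num⟩)
    have hadm : 3 * μ D ≤ 2 * μ A := by
      rw [mul_comm]
      exact (ENNReal.le_div_iff_mul_le (Or.inl (by norm_num)) (Or.inl (by norm_num))).1 hD5
    have : μ D ≤ c := hmemle _ ⟨D, hD1, hD2, hD3, hadm, rfl⟩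
    exact fun h => absurd (this.trans_eq h) (not_le.mpr hD4)
  -- choose an approximating sequence
  have hseq : ∀ n : ℕ, ∃ B, B ⊆ A ∧ MeasurableSet B ∧ KInvariantSet μ (fun x => p x) B ∧
      3 * μ B ≤ 2 * μ A ∧ c - ((n : ℝ≥0∞) + 1)⁻¹ < μ B := by
    intro n
    have hlt : c - ((n : ℝ≥0∞) + 1)⁻¹ < c :=
      ENNReal.sub_lt_self hcnetop hcpos (ENNReal.inv_ne_zero.2 (by
        exact ENNReal.add_ne_top.2 ⟨ENNReal.natCast_ne_top n, ENNReal.one_ne_top⟩))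
    obtain ⟨r, hrT, hr⟩ := lt_sSup_iff.mp hlt
    obtain ⟨B, h1, h2, h3, h4, h5⟩ := hrT
    exact ⟨B, h1, h2, h3, h4, h5 ▸ hr⟩
  choose Bs hBsub hBm hBi hBadm hBlt using hseq
  -- accumulated unions are admissible
  set Acc : ℕ → Set S := fun n => Nat.rec (Bs 0) (fun n acc => acc ∪ Bs (n + 1)) n with hAccdef
  have hAcc0 : Acc 0 = Bs 0 := rfl
  have hAccS : ∀ n, Acc (n + 1) = Acc n ∪ Bs (n + 1) := fun n => rfl
  have hAccMono : Monotone Acc :=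
    monotone_nat_of_le_succ fun n => by rw [hAccS]; exact Set.subset_union_left
  have hAccU : (⋃ n, Acc n) = ⋃ n, Bs n := by
    apply Set.Subset.antisymm
    · refine Set.iUnion_subset fun n => ?_
      induction n with
      | zero => exact Set.subset_iUnion Bs 0
      | succ n ih => rw [hAccS]; exact Set.union_subset ih (Set.subset_iUnion Bs (n + 1))
    · refine Set.iUnion_subset fun n => ?_
      refine Set.subset_iUnion_of_subset n ?_
      induction n with
      | zero => exact subset_rfl
      | succ n _ => rw [hAccS]; exact Set.subset_union_right
  have hAcc : ∀ n, Acc n ⊆ A ∧ MeasurableSet (Acc n) ∧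
      KInvariantSet μ (fun x => p x) (Acc n) ∧ 3 * μ (Acc n) ≤ 2 * μ A := by
    intro n
    induction n with
    | zero =>
      rw [hAcc0]
      exact ⟨hBsub 0, hBm 0, hBi 0, hBadm 0⟩
    | succ n ih =>
      obtain ⟨ih1, ih2, ih3, ih4⟩ := ih
      have hle : μ (Acc n) ≤ c := hmemle _ ⟨_, ih1, ih2, ih3, ih4, rfl⟩
      have hle' : μ (Bs (n + 1)) ≤ c := hmemle _ ⟨_, hBsub _, hBm _, hBi _, hBadm _, rfl⟩
      rw [hAccS]
      refine ⟨Set.union_subset ih1 (hBsub _), ih2.union (hBm _), aux_inv_union ih3 (hBi _), ?_⟩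
      calc 3 * μ (Acc n ∪ Bs (n + 1)) ≤ 3 * (μ (Acc n) + μ (Bs (n + 1))) :=
          mul_le_mul_right (measure_union_le _ _) _
        _ = 3 * μ (Acc n) + 3 * μ (Bs (n + 1)) := by rw [mul_add]
        _ ≤ μ A + μ A := add_le_add
            ((mul_le_mul_right hle 3).trans h3c) ((mul_le_mul_right hle' 3).trans h3c)
        _ = 2 * μ A := (two_mul _).symm
  set C : Set S := ⋃ n, Bs n with hCdef
  have hCsub : C ⊆ A := Set.iUnion_subset hBsub
  have hCm : MeasurableSet C := MeasurableSet.iUnion hBm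
  have hCi : KInvariantSet μ (fun x => p x) C := aux_inv_iUnion hBi
  have hCle : μ C ≤ c := by
    calc μ C = μ (⋃ n, Acc n) := by rw [hAccU]
      _ = ⨆ n, μ (Acc n) := hAccMono.measure_iUnion
      _ ≤ c := iSup_le fun n => hmemle _ ⟨_, (hAcc n).1, (hAcc n).2.1, (hAcc n).2.2.1,
          (hAcc n).2.2.2, rfl⟩
  have hCge : c ≤ μ C := by
    refine ENNReal.le_of_forall_pos_le_add fun ε hε _ => ?_
    obtain ⟨n, hn⟩ := ENNReal.exists_inv_nat_lt (a := (ε : ℝ≥0∞))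
      (by exact_mod_cast hε.ne')
    have h1 : c - ((n : ℝ≥0∞) + 1)⁻¹ ≤ μ C :=
      ((hBlt n).le.trans (measure_mono (Set.subset_iUnion Bs n)))
    have h2 : c ≤ μ C + ((n : ℝ≥0∞) + 1)⁻¹ := tsub_le_iff_right.mp h1
    refine h2.trans (add_le_add_right ?_ _)
    calc ((n : ℝ≥0∞) + 1)⁻¹ ≤ ((n : ℝ≥0∞))⁻¹ :=
          ENNReal.inv_le_inv.2 (le_add_of_nonneg_right zero_le_one)
      _ ≤ ε := hn.le
  have hCc : μ C = c := le_antisymm hCle hCge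
  have hCadm : 3 * μ C ≤ 2 * μ A := by
    rw [hCc]
    exact h3c.trans (le_mul_of_one_le_left zero_le one_le_two)
  have hClt : μ C < μ A := by
    have h3 : 3 * μ C < μ A := hsmall C hCsub hCm hCi hCadm
    exact (le_mul_of_one_le_left zero_le (by norm_num : (1 : ℝ≥0∞) ≤ 3)).trans_lt h3
  have hdiffpos : 0 < μ (A \ C) := by
    rw [pos_iff_ne_zero]
    intro h
    have : μ A ≤ μ C := by
      have hsub2 : A ⊆ C ∪ (A \ C) := by
        intro x hx
        by_cases hxC : x ∈ C
        · exact Or.inl hxC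
        · exact Or.inr ⟨hx, hxC⟩
      calc μ A ≤ μ (C ∪ (A \ C)) := measure_mono hsub2
        _ ≤ μ C + μ (A \ C) := measure_union_le _ _
        _ = μ C := by rw [h, add_zero]
    exact absurd this (not_le.mpr hClt)
  obtain ⟨D, hD1, hD2, hD3, hD4, hD5⟩ := aux_small hinv herg (hAm.diff hCm)
    (aux_inv_diff hinv hA hCm hCi) hdiffpos (ε := μ A / 3)
    (by rw [Ne, ENNReal.div_eq_zero_iff]; push_neg; exact ⟨hpos.ne', by norm_num⟩)
  have h3D : 3 * μ D ≤ μ A := by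
    rw [mul_comm]
    exact (ENNReal.le_div_iff_mul_le (Or.inl (by norm_num)) (Or.inl (by norm_num))).1 hD5
  have hdisj : Disjoint C D := Set.disjoint_right.2 fun x hxD => (hD1 hxD).2
  have hCDadm : 3 * μ (C ∪ D) ≤ 2 * μ A := by
    calc 3 * μ (C ∪ D) ≤ 3 * (μ C + μ D) := mul_le_mul_right (measure_union_le _ _) _
      _ = 3 * μ C + 3 * μ D := by rw [mul_add]
      _ ≤ μ A + μ A := add_le_add (hsmall C hCsub hCm hCi hCadm).le h3D
      _ = 2 * μ A := (two_mul _).symm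
  have hmem : μ (C ∪ D) ≤ c := hmemle _ ⟨C ∪ D,
    Set.union_subset hCsub (hD1.trans Set.diff_subset), hCm.union hD2,
    aux_inv_union hCi hD3, hCDadm, rfl⟩
  have hgt : c < μ (C ∪ D) := by
    rw [measure_union hdisj hD2, hCc]
    exact ENNReal.lt_add_right hcnetop hD4.ne'
  exact absurd hmem (not_le.mpr hgt)

private lemma aux_tree [IsMarkovKernel p] [IsProbabilityMeasure μ]
    (hinv : KInvariantMeasure μ (fun x => p x))
    (herg : ∀ G : Set S, KErgodicSet μ (fun x => p x) G → μ G = 0) (m : ℕ) :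
    ∃ G : (Fin m → Fin 2) → Set S,
      (∀ g, MeasurableSet (G g)) ∧ (∀ g, KInvariantSet μ (fun x => p x) (G g)) ∧
      Pairwise (Function.onFun Disjoint G) ∧ (⋃ g, G g) = univ ∧
      ∀ g, 0 < μ (G g) ∧ 3 ^ m * μ (G g) ≤ 2 ^ m := by
  induction m with
  | zero =>
    refine ⟨fun _ => univ, fun _ => MeasurableSet.univ, fun _ => aux_inv_univ, ?_, ?_, ?_⟩
    · intro a b hab
      exact absurd (funext fun i => i.elim0) hab
    · exact Set.iUnion_eq_univ_iff.mpr fun x => ⟨fun i => i.elim0, Set.mem_univ x⟩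
    · intro g
      simp [measure_univ]
  | succ m ih =>
    obtain ⟨G, hGm, hGi, hGd, hGu, hGb⟩ := ih
    choose B hBsub hBm hBi hBlo hBhi using
      fun g => aux_crux hinv herg (hGm g) (hGi g) (hGb g).1
    refine ⟨fun h => if h 0 = 0 then B (Fin.tail h) else G (Fin.tail h) \ B (Fin.tail h),
      ?_, ?_, ?_, ?_, ?_⟩
    · intro h
      dsimp only
      by_cases hh : h 0 = 0
      · rw [if_pos hh]; exact hBm _
      · rw [if_neg hh]; exact (hGm _).diff (hBm _)
    · intro h
      dsimp only
      by_cases hh : h 0 = 0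
      · rw [if_pos hh]; exact hBi _
      · rw [if_neg hh]; exact aux_inv_diff hinv (hGi _) (hBm _) (hBi _)
    · intro h h' hne
      simp only [Function.onFun]
      have hsub : ∀ g : Fin (m + 1) → Fin 2,
          (if g 0 = 0 then B (Fin.tail g) else G (Fin.tail g) \ B (Fin.tail g)) ⊆
            G (Fin.tail g) := by
        intro g
        by_cases hg : g 0 = 0
        · rw [if_pos hg]; exact hBsub _
        · rw [if_neg hg]; exact Set.diff_subset
      by_cases ht : Fin.tail h = Fin.tail h'
      · have hh0 : h 0 ≠ h' 0 := by
          intro h0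
          apply hne
          rw [← Fin.cons_self_tail h, ← Fin.cons_self_tail h', h0, ht]
        by_cases hc : h 0 = 0
        · have hc' : ¬ h' 0 = 0 := fun hc2 => hh0 (hc.trans hc2.symm)
          rw [if_pos hc, if_neg hc', ht]
          exact Set.disjoint_sdiff_right
        · have hc' : h' 0 = 0 := by
            have h1 := (h 0).isLt
            have h2 := (h' 0).isLt
            have h3 : (h 0 : ℕ) ≠ (h' 0 : ℕ) := fun hE => hh0 (Fin.val_injective hE)
            have h4 : (h 0 : ℕ) ≠ 0 := fun hE => hc (Fin.val_injective hE)
            exact Fin.val_injective (by omega)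
          rw [if_neg hc, if_pos hc', ht]
          exact Set.disjoint_sdiff_left
      · have hd : Disjoint (G (Fin.tail h)) (G (Fin.tail h')) := hGd ht
        exact hd.mono (hsub h) (hsub h')
    · rw [Set.iUnion_eq_univ_iff]
      intro x
      have hx : x ∈ ⋃ g, G g := hGu ▸ Set.mem_univ x
      obtain ⟨g, hg⟩ := Set.mem_iUnion.mp hx
      by_cases hxB : x ∈ B g
      · refine ⟨(Fin.cons (0 : Fin 2) g : Fin (m + 1) → Fin 2), ?_⟩
        rw [if_pos (show (Fin.cons (0 : Fin 2) g : Fin (m + 1) → Fin 2) 0 = 0 from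
          Fin.cons_zero _ _), Fin.tail_cons]
        exact hxB
      · refine ⟨(Fin.cons (1 : Fin 2) g : Fin (m + 1) → Fin 2), ?_⟩
        have h10 : ¬ (Fin.cons (1 : Fin 2) g : Fin (m + 1) → Fin 2) 0 = 0 := by
          rw [Fin.cons_zero]; decide
        rw [if_neg h10, Fin.tail_cons]
        exact ⟨hg, hxB⟩
    · intro h
      dsimp only
      set g := Fin.tail h with hg
      have hparent := hGb g
      have hposB : 0 < μ (B g) := by
        rw [pos_iff_ne_zero]
        intro h0
        have hlo := hBlo g
        rw [h0, mul_zero] at hlo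
        exact absurd hlo (not_le.mpr (hparent.1))
      have hkey : ∀ X : Set S, 0 < μ X → 3 * μ X ≤ 2 * μ (G g) →
          0 < μ X ∧ 3 ^ (m + 1) * μ X ≤ 2 ^ (m + 1) := by
        intro X hX h3X
        refine ⟨hX, ?_⟩
        calc (3 : ℝ≥0∞) ^ (m + 1) * μ X = 3 ^ m * (3 * μ X) := by
              rw [pow_succ, mul_assoc]
          _ ≤ 3 ^ m * (2 * μ (G g)) := mul_le_mul_right h3X _
          _ = 2 * (3 ^ m * μ (G g)) := by ring
          _ ≤ 2 * 2 ^ m := mul_le_mul_right hparent.2 _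
          _ = 2 ^ (m + 1) := by rw [pow_succ]; ring
      have hdiffbound : 3 * μ (G g \ B g) ≤ 2 * μ (G g) := by
        have hsum : μ (B g) + μ (G g \ B g) = μ (G g) := by
          rw [measure_add_diff (hBm g).nullMeasurableSet,
            Set.union_eq_self_of_subset_left (hBsub g)]
        have : 3 * μ (G g \ B g) + μ (G g) ≤ 2 * μ (G g) + μ (G g) := by
          calc 3 * μ (G g \ B g) + μ (G g) ≤ 3 * μ (G g \ B g) + 3 * μ (B g) :=
                add_le_add_right (hBlo g) _
            _ = 3 * (μ (B g) + μ (G g \ B g)) := by ring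
            _ = 3 * μ (G g) := by rw [hsum]
            _ = 2 * μ (G g) + μ (G g) := by ring
        exact (ENNReal.add_le_add_iff_right (measure_ne_top μ _)).1 this
      have hdiffpos : 0 < μ (G g \ B g) := by
        rw [pos_iff_ne_zero]
        intro h0
        have hBlt : μ (B g) < μ (G g) := by
          have h1 : 3 * μ (B g) ≤ 2 * μ (G g) := hBhi g
          have h2 : 2 * μ (G g) < 3 * μ (G g) :=
            (ENNReal.mul_lt_mul_iff_left (hparent.1.ne') (measure_ne_top μ _)).2 (by norm_num)
          have h3 : 3 * μ (B g) < 3 * μ (G g) := h1.trans_lt h2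
          exact (ENNReal.mul_lt_mul_iff_right (by norm_num) (by norm_num)).1 h3
        have : μ (G g) ≤ μ (B g) := by
          have hsub3 : G g ⊆ B g ∪ (G g \ B g) := by
            intro x hx
            by_cases hxB : x ∈ B g
            · exact Or.inl hxB
            · exact Or.inr ⟨hx, hxB⟩
          calc μ (G g) ≤ μ (B g ∪ (G g \ B g)) := measure_mono hsub3
            _ ≤ μ (B g) + μ (G g \ B g) := measure_union_le _ _
            _ = μ (B g) := by rw [h0, add_zero]
        exact absurd this (not_le.mpr hBlt)
      by_cases hh : h 0 = 0
      · rw [if_pos hh]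
        exact hkey _ hposB (hBhi g)
      · rw [if_neg hh]
        exact hkey _ hdiffpos hdiffbound

end AuxPartition

/-- if `μ` is an invariant probability measure for a Markov kernel `p` and
every `(μ,p)`-ergodic set is `μ`-null, then for every `k ≥ 1` the space can be partitioned
into `2^(2k)` invariant sets, each of positive measure at most `2^(-k)`. -/
theorem partition_into_small_invariant_sets
    {S : Type*} [MeasurableSpace S] (p : Kernel S S) (hp : IsMarkovKernel p)
    (μ : Measure S) (hμ : IsProbabilityMeasure μ)
    (hinv : KInvariantMeasure μ (fun x => p x))
    (herg : ∀ G : Set S, KErgodicSet μ (fun x => p x) G → μ G = 0)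
    (k : ℕ) (hk : 1 ≤ k) :
    ∃ F : Fin (2 ^ (2 * k)) → Set S,
      (∀ i, MeasurableSet (F i)) ∧
      (∀ i, KInvariantSet μ (fun x => p x) (F i)) ∧
      Pairwise (Function.onFun Disjoint F) ∧
      (⋃ i, F i) = univ ∧
      ∀ i, 0 < μ (F i) ∧ μ (F i) ≤ (2 : ℝ≥0∞)⁻¹ ^ k := by
  haveI := hp
  haveI := hμ
  obtain ⟨G, hGm, hGi, hGd, hGu, hGb⟩ := aux_tree hinv herg (2 * k)
  have e : (Fin (2 * k) → Fin 2) ≃ Fin (2 ^ (2 * k)) := finFunctionFinEquiv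
  refine ⟨fun i => G (e.symm i), fun i => hGm _, fun i => hGi _, ?_, ?_, ?_⟩
  · intro i j hij
    exact hGd fun h => hij (e.symm.injective h)
  · rw [e.symm.surjective.iUnion_comp (fun g => G g)]
    exact hGu
  · intro i
    obtain ⟨hpos, hb⟩ := hGb (e.symm i)
    refine ⟨hpos, ?_⟩
    set x := μ (G (e.symm i)) with hx
    have h9 : (9 : ℝ≥0∞) ^ k * x ≤ 4 ^ k := by
      have h1 : (3 : ℝ≥0∞) ^ (2 * k) = 9 ^ k := by
        rw [pow_mul]; norm_num
      have h2 : (2 : ℝ≥0∞) ^ (2 * k) = 4 ^ k := by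
        rw [pow_mul]; norm_num
      rw [← h1, ← h2]
      exact hb
    have h8 : (8 : ℝ≥0∞) ^ k * x ≤ 4 ^ k := by
      refine le_trans ?_ h9
      exact mul_le_mul_left (pow_le_pow_left₀ (by norm_num) (by norm_num) k) x
    have h2k : (2 : ℝ≥0∞) ^ k * x ≤ 1 := by
      have h84 : (8 : ℝ≥0∞) ^ k = 4 ^ k * 2 ^ k := by
        rw [← mul_pow]; norm_num
      rw [h84, mul_assoc] at h8
      have := (ENNReal.mul_le_mul_iff_right (a := (4 : ℝ≥0∞) ^ k)
        (by positivity) (by exact ENNReal.pow_ne_top (by norm_num))).1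
        (h8.trans_eq (mul_one _).symm)
      exact this
    rw [← ENNReal.inv_pow]
    rw [ENNReal.le_inv_iff_mul_le, mul_comm]
    exact h2k
end
end

section
/- Let p be a Markov kernel on a measurable space (S,𝒮) and let μ be a probability measure on (S,𝒮) invariant for p, with the property that every (μ,p)-ergodic set G ∈ 𝒮 satisfies μ(G) = 0. Then for every (μ,p)-invariant set F ∈ 𝒮 there exists a (μ,p)-invariant set F′ ∈ 𝒮 with F′ ⊂ F and (1/4)μ(F) ≤ μ(F′) ≤ (1/2)μ(F). -/
open MeasureTheory ProbabilityTheory Set Pointwise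
open scoped ENNReal

noncomputable section

section auxHalf
variable {S : Type*} [MeasurableSpace S] (p : Kernel S S) [IsMarkovKernel p]
  (μ : Measure S) [IsProbabilityMeasure μ]

lemma inv_union' {A B : Set S} (hA : KInvariantSet μ (fun x => p x) A)
    (hB : KInvariantSet μ (fun x => p x) B) :
    KInvariantSet μ (fun x => p x) (A ∪ B) := by
  filter_upwards [hA, hB] with x hxA hxB hx
  refine le_antisymm prob_le_one ?_
  rcases hx with h | h
  · exact (hxA h) ▸ measure_mono subset_union_left
  · exact (hxB h) ▸ measure_mono subset_union_right

lemma inv_iUnion' (B : ℕ → Set S) (h : ∀ n, KInvariantSet μ (fun x => p x) (B n)) :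
    KInvariantSet μ (fun x => p x) (⋃ n, B n) := by
  filter_upwards [ae_all_iff.2 h] with x hx hxU
  obtain ⟨n, hn⟩ := mem_iUnion.1 hxU
  exact le_antisymm prob_le_one ((hx n hn) ▸ measure_mono (subset_iUnion B n))

lemma pB_zero' {B : Set S} (hB : MeasurableSet B) (hinv : KInvariantMeasure μ (fun x => p x))
    (hBi : KInvariantSet μ (fun x => p x) B) :
    ∀ᵐ x ∂μ, x ∉ B → p x B = 0 := by
  have hmeas : Measurable fun x => p x B := p.measurable_coe hB
  have htot : ∫⁻ x, p x B ∂μ = μ B := hinv B hB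
  have hin : ∫⁻ x in B, p x B ∂μ = μ B := by
    rw [setLIntegral_congr_fun_ae hB (by filter_upwards [hBi] with x h hx; exact h hx :
      ∀ᵐ x ∂μ, x ∈ B → p x B = (fun _ => (1:ℝ≥0∞)) x)]
    simp
  have hsplit : ∫⁻ x in B, p x B ∂μ + ∫⁻ x in Bᶜ, p x B ∂μ = ∫⁻ x, p x B ∂μ :=
    lintegral_add_compl _ hB
  have hzero : ∫⁻ x in Bᶜ, p x B ∂μ = 0 := by
    rw [hin, htot] at hsplit
    have hfin : μ B ≠ ∞ := measure_ne_top μ B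
    nth_rewrite 2 [show μ B = μ B + 0 by simp] at hsplit
    exact (ENNReal.add_right_inj hfin).1 hsplit
  have h0 := (lintegral_eq_zero_iff hmeas).1 hzero
  rw [Filter.EventuallyEq, ae_restrict_iff' hB.compl] at h0
  filter_upwards [h0] with x hx hxB using hx hxB

lemma inv_diff' {A B : Set S} (hinv : KInvariantMeasure μ (fun x => p x))
    (hA : KInvariantSet μ (fun x => p x) A) (hB : KInvariantSet μ (fun x => p x) B)
    (hBm : MeasurableSet B) : KInvariantSet μ (fun x => p x) (A \ B) := by
  filter_upwards [hA, pB_zero' p μ hBm hinv hB] with x hxA hxB hx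
  have h1 : p x A = 1 := hxA hx.1
  have h0 : p x B = 0 := hxB hx.2
  refine le_antisymm prob_le_one ?_
  have := le_measure_diff (μ := p x) (s₁ := A) (s₂ := B)
  rw [h1, h0] at this; simpa using this

lemma quarter_add_quarter' (a : ℝ≥0∞) : a/4 + a/4 = a/2 := by
  rw [ENNReal.div_add_div_same, ← two_mul,
    show (4:ℝ≥0∞) = 2*2 by norm_num,
    ENNReal.mul_div_mul_left _ _ (by norm_num) (by norm_num)]

lemma exists_small_piece' (hinv : KInvariantMeasure μ (fun x => p x))
    (herg : ∀ G : Set S, KErgodicSet μ (fun x => p x) G → μ G = 0)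
    {A : Set S} (hAm : MeasurableSet A) (hAi : KInvariantSet μ (fun x => p x) A)
    (hA0 : μ A ≠ 0) :
    ∃ D : Set S, D ⊆ A ∧ MeasurableSet D ∧ KInvariantSet μ (fun x => p x) D ∧
      μ D ≠ 0 ∧ μ D ≤ μ A / 2 := by
  have hne : ¬ KErgodicSet μ (fun x => p x) A := fun h => hA0 (herg A h)
  have hex : ∃ B : Set S, B ⊆ A ∧ MeasurableSet B ∧ KInvariantSet μ (fun x => p x) B ∧
      μ B ≠ 0 ∧ μ B ≠ μ A := by
    by_contra hc
    push_neg at hc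
    refine hne ⟨hAm, hAi, fun B hBA hBm hBi => ?_⟩
    by_cases h0 : μ B = 0
    · exact Or.inl h0
    · exact Or.inr (by_contra fun hne' => hne' (False.elim (hne' (hc B hBA hBm hBi h0 ▸ rfl))))
  obtain ⟨B, hBA, hBm, hBi, hB0, hBA'⟩ := hex
  rcases le_or_gt (μ B) (μ A / 2) with h | h
  · exact ⟨B, hBA, hBm, hBi, hB0, h⟩
  · refine ⟨A \ B, diff_subset, hAm.diff hBm, inv_diff' p μ hinv hAi hBi hBm, ?_, ?_⟩
    · have hlt : μ B < μ A := lt_of_le_of_ne (measure_mono hBA) hBA'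
      rw [measure_diff hBA hBm.nullMeasurableSet (measure_ne_top μ B)]
      exact (tsub_pos_iff_lt.2 hlt).ne'
    · rw [measure_diff hBA hBm.nullMeasurableSet (measure_ne_top μ B)]
      refine tsub_le_iff_right.2 ?_
      calc μ A = μ A/2 + μ A/2 := (ENNReal.add_halves _).symm
      _ ≤ μ A/2 + μ B := add_le_add_right h.le _

end auxHalf

/-- if `μ` is an invariant probability measure for a Markov kernel `p` and
every `(μ,p)`-ergodic set is `μ`-null, then every invariant set `F` contains an invariant
subset `F′` with `μ(F)/4 ≤ μ(F′) ≤ μ(F)/2`. -/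
theorem exists_half_invariant_subset
    {S : Type*} [MeasurableSpace S] (p : Kernel S S) (hp : IsMarkovKernel p)
    (μ : Measure S) (hμ : IsProbabilityMeasure μ)
    (hinv : KInvariantMeasure μ (fun x => p x))
    (herg : ∀ G : Set S, KErgodicSet μ (fun x => p x) G → μ G = 0) :
    ∀ F : Set S, MeasurableSet F → KInvariantSet μ (fun x => p x) F →
      ∃ F' : Set S, MeasurableSet F' ∧ F' ⊆ F ∧ KInvariantSet μ (fun x => p x) F' ∧
        μ F / 4 ≤ μ F' ∧ μ F' ≤ μ F / 2 := by
  haveI := hp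
  haveI := hμ
  intro F hFm hFi
  have hEmptyInv : KInvariantSet μ (fun x => p x) (∅ : Set S) := by
    filter_upwards with x hx; simp at hx
  by_cases hF0 : μ F = 0
  · exact ⟨∅, MeasurableSet.empty, empty_subset F, hEmptyInv, by simp [hF0], by simp⟩
  by_contra hcon
  push_neg at hcon
  have H : ∀ B : Set S, MeasurableSet B → B ⊆ F → KInvariantSet μ (fun x => p x) B →
      μ B < μ F / 4 ∨ μ F / 2 < μ B := by
    intro B hm hs hi
    rcases lt_or_ge (μ B) (μ F / 4) with h | h
    · exact Or.inl h
    · exact Or.inr (hcon B hm hs hi h)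
  set t := μ F with ht
  have htfin : t ≠ ∞ := measure_ne_top μ F
  have hq2 : t/4 + t/4 = t/2 := quarter_add_quarter' t
  have h42 : t/4 ≤ t/2 := ENNReal.div_le_div_left (by norm_num) t
  have h4t : t/4 ≤ t := by
    conv_rhs => rw [show t = t/1 by simp]
    exact ENNReal.div_le_div_left (by norm_num) t
  have hqpos : (0:ℝ≥0∞) < t/4 := ENNReal.div_pos hF0 (by norm_num)
  set T : Set (Set S) :=
    {B | MeasurableSet B ∧ B ⊆ F ∧ KInvariantSet μ (fun x => p x) B ∧ μ B < t/4} with hT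
  have hEmptyT : (∅ : Set S) ∈ T :=
    ⟨MeasurableSet.empty, empty_subset F, hEmptyInv, by simpa using hqpos⟩
  haveI : Nonempty T := ⟨⟨∅, hEmptyT⟩⟩
  set s := ⨆ b : T, μ (b : Set S) with hsd
  have hsle : s ≤ t/4 := iSup_le fun b => b.2.2.2.2.le
  have hsfin : s ≠ ∞ := (hsle.trans_lt (h4t.trans_lt htfin.lt_top)).ne
  have hUnionT : ∀ B B' : Set S, B ∈ T → B' ∈ T → B ∪ B' ∈ T := by
    intro B B' hB hB'
    have hm := hB.1.union hB'.1
    have hsub : B ∪ B' ⊆ F := union_subset hB.2.1 hB'.2.1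
    have hi := inv_union' p μ hB.2.2.1 hB'.2.2.1
    have hlt2 : μ (B ∪ B') < t/2 := by
      calc μ (B ∪ B') ≤ μ B + μ B' := measure_union_le _ _
      _ < t/4 + t/4 := ENNReal.add_lt_add hB.2.2.2 hB'.2.2.2
      _ = t/2 := hq2
    rcases H _ hm hsub hi with h | h
    · exact ⟨hm, hsub, hi, h⟩
    · exact absurd h (not_lt.2 hlt2.le)
  obtain ⟨C, hCm, hCF, hCi, hsC, hCle⟩ : ∃ C : Set S, MeasurableSet C ∧ C ⊆ F ∧
      KInvariantSet μ (fun x => p x) C ∧ s ≤ μ C ∧ μ C ≤ t/4 := by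
    by_cases hs0 : s = 0
    · exact ⟨∅, MeasurableSet.empty, empty_subset F, hEmptyInv, by simp [hs0], by simp⟩
    have hchoice : ∀ n : ℕ, ∃ b : T, s - ((n:ℝ≥0∞)+1)⁻¹ < μ (b : Set S) := by
      intro n
      have hlt : s - ((n:ℝ≥0∞)+1)⁻¹ < s :=
        ENNReal.sub_lt_self hsfin hs0 (by simp)
      exact lt_iSup_iff.1 hlt
    choose b hb using hchoice
    let Ac : ℕ → T := fun n => Nat.rec (motive := fun _ => T) (b 0)
      (fun n acc => ⟨acc.1 ∪ (b (n+1)).1, hUnionT _ _ acc.2 (b (n+1)).2⟩) n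
    have hAcmono : Monotone (fun n => (Ac n).1) := by
      apply monotone_nat_of_le_succ
      intro n
      exact subset_union_left
    have hbAc : ∀ n, (b n).1 ⊆ (Ac n).1 := by
      intro n
      cases n with
      | zero => exact subset_rfl
      | succ m => exact subset_union_right
    refine ⟨⋃ n, (Ac n).1, MeasurableSet.iUnion (fun n => (Ac n).2.1),
      iUnion_subset (fun n => (Ac n).2.2.1),
      inv_iUnion' p μ _ (fun n => (Ac n).2.2.2.1), ?_, ?_⟩
    · set C := ⋃ n, (Ac n).1
      by_contra hlt
      push_neg at hlt
      have hCfin : μ C ≠ ∞ := measure_ne_top μ C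
      have hpos : s - μ C ≠ 0 := (tsub_pos_iff_lt.2 hlt).ne'
      obtain ⟨n, hn⟩ := ENNReal.exists_inv_nat_lt hpos
      have hn1 : ((n:ℝ≥0∞)+1)⁻¹ < s - μ C := by
        refine lt_of_le_of_lt ?_ hn
        exact ENNReal.inv_le_inv.2 (by simp)
      have h1 : s - ((n:ℝ≥0∞)+1)⁻¹ < μ C :=
        lt_of_lt_of_le (hb n) (le_trans (measure_mono (hbAc n)) (measure_mono (subset_iUnion (fun k => (Ac k).1) n)))
      have h2 : s ≤ μ C + ((n:ℝ≥0∞)+1)⁻¹ := tsub_le_iff_right.1 h1.le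
      have h3 : μ C + ((n:ℝ≥0∞)+1)⁻¹ < μ C + (s - μ C) :=
        ENNReal.add_lt_add_left hCfin hn1
      rw [add_comm (μ C) (s - μ C), tsub_add_cancel_of_le hlt.le] at h3
      exact absurd (lt_of_le_of_lt h2 h3) (lt_irrefl s)
    · rw [Directed.measure_iUnion (hAcmono.directed_le)]
      exact iSup_le fun n => (Ac n).2.2.2.2.le
  rcases eq_or_lt_of_le hCle with heq | hlt4
  · have := hcon C hCm hCF hCi heq.symm.le
    exact absurd this (not_lt.2 (heq.le.trans h42))
  have hCT : C ∈ T := ⟨hCm, hCF, hCi, hlt4⟩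
  have hCs : μ C = s := le_antisymm (le_iSup (fun b : T => μ (b : Set S)) ⟨C, hCT⟩) hsC
  have hA0 : μ (F \ C) ≠ 0 := by
    rw [measure_diff hCF hCm.nullMeasurableSet (measure_ne_top μ C)]
    exact (tsub_pos_iff_lt.2 (lt_of_lt_of_le hlt4 h4t)).ne'
  obtain ⟨D, hDA, hDm, hDi, hD0, hDhalf⟩ := exists_small_piece' p μ hinv herg
    (hFm.diff hCm) (inv_diff' p μ hinv hFi hCi hCm) hA0
  have hDF : D ⊆ F := hDA.trans diff_subset
  have hDle2 : μ D ≤ t/2 := by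
    refine hDhalf.trans ?_
    exact ENNReal.div_le_div_right (measure_mono diff_subset) 2
  have hD4 : μ D < t/4 := by
    rcases H D hDm hDF hDi with h | h
    · exact h
    · exact absurd (lt_of_lt_of_le h hDle2) (lt_irrefl _)
  have hdisj : Disjoint C D := by
    rw [Set.disjoint_left]
    intro x hxC hxD
    exact (hDA hxD).2 hxC
  have hEm : MeasurableSet (C ∪ D) := hCm.union hDm
  have hEF : C ∪ D ⊆ F := union_subset hCF hDF
  have hEi : KInvariantSet μ (fun x => p x) (C ∪ D) := inv_union' p μ hCi hDi
  have hEmeas : μ (C ∪ D) = s + μ D := by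
    rw [measure_union hdisj hDm, hCs]
  rcases H _ hEm hEF hEi with h | h
  · have hET : C ∪ D ∈ T := ⟨hEm, hEF, hEi, h⟩
    have : μ (C ∪ D) ≤ s := le_iSup (fun b : T => μ (b : Set S)) ⟨C ∪ D, hET⟩
    rw [hEmeas] at this
    have : μ D ≤ 0 := by
      have h' : s + μ D ≤ s + 0 := by simpa using this
      exact (ENNReal.add_le_add_iff_left hsfin).1 h'
    exact hD0 (le_antisymm this zero_le)
  · have : μ (C ∪ D) < t/2 := by
      rw [hEmeas, ← hq2]
      exact ENNReal.add_lt_add (hCs ▸ hlt4) hD4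
    exact absurd h (not_lt.2 this.le)
end
end
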